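/- Let S be a decision rule system with n(S) > 0 and let α = {a_{i_1}=δ_1, …, a_{i_m}=δ_m} be a consistent equation system such that a_{i_1}, …, a_{i_m} ∈ A(S) and, for j = 1, …, m, δ_j ∈ EV_S(a_{i_j}). If S_α is nonempty and n(S_α) > 0, then β((S_α)^max) ≤ h_EAR(S) and ln|(S_α)^max| ≤ h_EAR(S) · ln(k(S)+1); consequently β((S_α)^max) · ln|(S_α)^max| + 1 ≤ h_EAR(S)² · ln(k(S)+1) + 1. -/

import Mathlib

/-! Formalization of decision rule systems and decision trees
(Durdymyradov & Moshkov, "Greedy Algorithm for Inference of Decision Trees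
from Decision Rule Systems"). -/

/-- Values of attributes: `some δ` is a natural number value, `none` is the
special symbol `*` (interpreted as a value not occurring in the system). -/
abbrev Val := Option ℕ

/-- A decision rule `(a_{i₁}=δ₁) ∧ ⋯ ∧ (a_{iₘ}=δₘ) → σ`: the left-hand side
is a finite set of equations (attribute, value), the right-hand side a decision. -/
structure Rule where
  lhs : Finset (ℕ × ℕ)
  rhs : ℕ
deriving DecidableEq

namespace Rule

/-- `A(r)`: the set of attributes of a rule. -/
def attrs (r : Rule) : Finset ℕ := r.lhs.image Prod.fst

/-- `K(r)`: the equation system of the left-hand side of a rule. -/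
def K (r : Rule) : Finset (ℕ × Val) := r.lhs.image (fun p => (p.1, some p.2))

/-- the length of a rule -/
def len (r : Rule) : ℕ := r.lhs.card

/-- A rule is wellformed if the attributes in its left-hand side are pairwise
different, i.e. each attribute carries at most one equation. -/
def WF (r : Rule) : Prop := ∀ p ∈ r.lhs, ∀ q ∈ r.lhs, p.1 = q.1 → p = q

end Rule

/-- `A(S)`: the set of attributes of a system of decision rules. -/
def attrsS (S : Finset Rule) : Finset ℕ := S.biUnion Rule.attrs

/-- `n(S) = |A(S)|`. -/
def nS (S : Finset Rule) : ℕ := (attrsS S).card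

/-- `d(S)`: maximum length of a rule of `S`. -/
def dS (S : Finset Rule) : ℕ := S.sup Rule.len

/-- `V_S(a)`: the set of values δ such that the equation `a = δ` occurs in `S`. -/
def VS (S : Finset Rule) (a : ℕ) : Finset ℕ :=
  S.biUnion (fun r => (r.lhs.filter (fun p => p.1 = a)).image Prod.snd)

/-- `EV_S(a) = V_S(a) ∪ {*}`. -/
def EVS (S : Finset Rule) (a : ℕ) : Finset Val := insert none ((VS S a).image some)

/-- `k(S) = max{|V_S(a)| : a ∈ A(S)}`. -/
def kS (S : Finset Rule) : ℕ := (attrsS S).sup (fun a => (VS S a).card)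

/-- A (wellformed) decision rule system: a finite nonempty set of wellformed rules. -/
def SysWF (S : Finset Rule) : Prop := S.Nonempty ∧ ∀ r ∈ S, r.WF

/-- An equation system is consistent if it does not assign two different values
to the same attribute. -/
def Consistent (E : Finset (ℕ × Val)) : Prop :=
  ∀ p ∈ E, ∀ q ∈ E, p.1 = q.1 → p.2 = q.2

instance : DecidablePred Consistent := fun E => by unfold Consistent; infer_instance

/-- `r_α`: the rule obtained from `r` by deleting from its left-hand side all
equations belonging to `α`. -/
def Rule.restrict (r : Rule) (α : Finset (ℕ × Val)) : Rule :=
  ⟨r.lhs.filter (fun p => ((p.1, (some p.2 : Val)) ∉ α)), r.rhs⟩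

/-- `S_α`: the set of rules `r_α` for `r ∈ S` with `K(r) ∪ α` consistent. -/
def sysRestrict (S : Finset Rule) (α : Finset (ℕ × Val)) : Finset Rule :=
  (S.filter (fun r => Consistent (r.K ∪ α))).image (fun r => r.restrict α)

/-- Extended decision trees: terminal nodes are labeled with sets of rules, and a
working node is labeled with an attribute and has one child for each value
(only the children corresponding to values in `EV_S(a)` are relevant). -/
inductive DT where
  | leaf (τ : Finset Rule) : DT
  | node (a : ℕ) (c : Val → DT) : DT

/-- `Γ` is an extended decision tree over `S`: working nodes are labeled with
attributes of `A(S)` (with edges labeled by the elements of `EV_S(a)`),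
terminal nodes with subsets of `S`. -/
def DT.Over (S : Finset Rule) : DT → Prop
  | .leaf τ => τ ⊆ S
  | .node a c => a ∈ attrsS S ∧ ∀ v ∈ EVS S a, DT.Over S (c v)

/-- `h(Γ)`: the maximum number of working nodes in a complete path of `Γ`. -/
def DT.depth (S : Finset Rule) : DT → ℕ
  | .leaf _ => 0
  | .node a c => 1 + (EVS S a).sup (fun v => DT.depth S (c v))

/-- The number of terminal nodes of `Γ`. -/
def DT.numLeaves (S : Finset Rule) : DT → ℕ
  | .leaf _ => 1
  | .node a c => ∑ v ∈ EVS S a, DT.numLeaves S (c v)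

/-- `Γ` solves `EAR(S)` starting from the already accumulated equation system `E`:
for every complete path `ξ` with consistent `K(ξ)`, every rule of the terminal
label `τ(ξ)` satisfies `K(r) ⊆ K(ξ)`, and every other rule of `S` has
`K(r) ∪ K(ξ)` inconsistent. -/
def DT.SolvesFrom (S : Finset Rule) : DT → Finset (ℕ × Val) → Prop
  | .leaf τ, E => Consistent E →
      (∀ r ∈ τ, r.K ⊆ E) ∧ ∀ r ∈ S, r ∉ τ → ¬ Consistent (r.K ∪ E)
  | .node a c, E => ∀ v ∈ EVS S a, DT.SolvesFrom S (c v) (insert (a, v) E)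

/-- `Γ` is a decision tree over `S` solving the problem `EAR(S)`. -/
def DT.SolvesEAR (S : Finset Rule) (Γ : DT) : Prop := Γ.Over S ∧ Γ.SolvesFrom S ∅

/-- `h_EAR(S)`: the minimum depth of a decision tree over `S` solving `EAR(S)`. -/
noncomputable def hEAR (S : Finset Rule) : ℕ :=
  sInf {n | ∃ Γ : DT, DT.SolvesEAR S Γ ∧ DT.depth S Γ = n}

/-- A node cover of the hypergraph `G(S)`. -/
def IsNodeCover (S : Finset Rule) (B : Finset ℕ) : Prop :=
  B ⊆ attrsS S ∧ ∀ r ∈ S, r.attrs.Nonempty → (r.attrs ∩ B).Nonempty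

/-- `β(S)`: the minimum cardinality of a node cover of `G(S)`. -/
noncomputable def betaS (S : Finset Rule) : ℕ :=
  sInf {k | ∃ B : Finset ℕ, IsNodeCover S B ∧ B.card = k}

/-- `M` is a possible choice of `S^max`: a set of rules of `S` of length `d(S)`
containing exactly one representative from each equivalence class
(`r₁ ∼ r₂ iff K(r₁) = K(r₂)`) of the set of rules of length `d(S)`, and
no other rules. -/
def IsMaxSet (S M : Finset Rule) : Prop :=
  (∀ r ∈ M, r ∈ S ∧ r.len = dS S) ∧
  (∀ r ∈ S, r.len = dS S → ∃ r' ∈ M, r'.K = r.K) ∧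
  (∀ r₁ ∈ M, ∀ r₂ ∈ M, r₁.K = r₂.K → r₁ = r₂)

/-- `δ̄ ∈ EV(S)`, a tuple represented as a function on attributes. -/
def InEV (S : Finset Rule) (f : ℕ → Val) : Prop := ∀ a ∈ attrsS S, f a ∈ EVS S a

/-- `K(S, δ̄)`. -/
def KofTuple (S : Finset Rule) (f : ℕ → Val) : Finset (ℕ × Val) :=
  (attrsS S).image (fun a => (a, f a))

/-- The rule `r` is realizable for the tuple `δ̄`, i.e. `K(r) ⊆ K(S, δ̄)`. -/
def Realizable (S : Finset Rule) (f : ℕ → Val) (r : Rule) : Prop :=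
  r.K ⊆ KofTuple S f

instance (S : Finset Rule) (f : ℕ → Val) : DecidablePred (Realizable S f) :=
  fun r => by unfold Realizable; infer_instance

section Aux

open Finset

open Classical in
/-- The value assigned by a consistent equation system to an attribute. -/
noncomputable def valAt (E : Finset (ℕ × Val)) (a : ℕ) : Val :=
  if h : ∃ v, (a, v) ∈ E then h.choose else none

lemma valAt_eq {E : Finset (ℕ × Val)} (hc : Consistent E) {a : ℕ} {v : Val}
    (h : (a, v) ∈ E) : valAt E a = v := by
  have he : ∃ v, (a, v) ∈ E := ⟨v, h⟩
  rw [valAt, dif_pos he]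
  exact hc _ he.choose_spec _ h rfl

lemma valAt_mem {E : Finset (ℕ × Val)} {a : ℕ} {v : ℕ}
    (h : valAt E a = some v) : (a, some v) ∈ E := by
  by_cases he : ∃ w, (a, w) ∈ E
  · rw [valAt, dif_pos he] at h
    exact h ▸ he.choose_spec
  · rw [valAt, dif_neg he] at h
    exact absurd h (by simp)

lemma consistent_of_fun {E : Finset (ℕ × Val)} {f : ℕ → Val}
    (h : ∀ p ∈ E, p.2 = f p.1) : Consistent E := fun p hp q hq hpq => by
  rw [h p hp, h q hq, hpq]

lemma K_consistent {r : Rule} (h : r.WF) : Consistent r.K := by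
  intro p hp q hq hpq
  simp only [Rule.K, Finset.mem_image] at hp hq
  obtain ⟨p0, hp0, rfl⟩ := hp
  obtain ⟨q0, hq0, rfl⟩ := hq
  simp only at hpq ⊢
  rw [h p0 hp0 q0 hq0 hpq]

lemma K_restrict (r : Rule) (α : Finset (ℕ × Val)) :
    (r.restrict α).K = r.K.filter (fun p => p ∉ α) := by
  ext p
  simp only [Rule.K, Rule.restrict, Finset.mem_image, Finset.mem_filter]
  constructor
  · rintro ⟨q, hq, rfl⟩
    exact ⟨⟨q, hq.1, rfl⟩, hq.2⟩
  · rintro ⟨⟨q, hq, rfl⟩, hp⟩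
    exact ⟨q, ⟨hq, hp⟩, rfl⟩

lemma attr_mem_attrsS {S : Finset Rule} {r : Rule} (hr : r ∈ S) {a : ℕ} (ha : a ∈ r.attrs) :
    a ∈ attrsS S := Finset.mem_biUnion.mpr ⟨r, hr, ha⟩

/-- A full decision tree querying the attributes in `l`. -/
def buildDT (S : Finset Rule) : List ℕ → Finset (ℕ × Val) → DT
  | [], E => .leaf (S.filter (fun r => r.K ⊆ E))
  | a :: l, E => .node a (fun v => buildDT S l (insert (a, v) E))

lemma buildDT_over (S : Finset Rule) : ∀ l : List ℕ, ∀ E, (∀ a ∈ l, a ∈ attrsS S) →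
    (buildDT S l E).Over S
  | [], E, _ => Finset.filter_subset _ _
  | a :: l, E, h =>
      ⟨h a (List.mem_cons_self),
        fun v _ => buildDT_over S l (insert (a, v) E) (fun b hb => h b (List.mem_cons_of_mem a hb))⟩

lemma buildDT_solves (S : Finset Rule) : ∀ l : List ℕ, ∀ E,
    (∀ a ∈ attrsS S, a ∈ l ∨ ∃ v, (a, v) ∈ E) →
    (buildDT S l E).SolvesFrom S E
  | [], E, h => by
      intro hE
      constructor
      · intro r hr
        exact (Finset.mem_filter.mp hr).2
      · intro r hr hrτ hcons
        have hns : ¬ r.K ⊆ E := fun hsub => hrτ (Finset.mem_filter.mpr ⟨hr, hsub⟩)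
        obtain ⟨p, hp, hpE⟩ := Finset.not_subset.mp hns
        have hpa : p.1 ∈ attrsS S := by
          apply attr_mem_attrsS hr
          simp only [Rule.K, Finset.mem_image] at hp
          obtain ⟨q, hq, rfl⟩ := hp
          exact Finset.mem_image_of_mem _ hq
        obtain ⟨v, hv⟩ := (h p.1 hpa).resolve_left List.not_mem_nil
        have hval : p.2 = v :=
          hcons p (Finset.mem_union_left _ hp) (p.1, v) (Finset.mem_union_right _ hv) rfl
        apply hpE
        have : p = (p.1, v) := by
          rw [← hval]
        rw [this]
        exact hv
  | a :: l, E, h => by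
      intro v _
      apply buildDT_solves S l (insert (a, v) E)
      intro b hb
      rcases h b hb with hbl | ⟨w, hw⟩
      · rcases List.mem_cons.mp hbl with rfl | hbl
        · exact Or.inr ⟨v, Finset.mem_insert_self _ _⟩
        · exact Or.inl hbl
      · exact Or.inr ⟨w, Finset.mem_insert_of_mem hw⟩

lemma buildDT_depth (S : Finset Rule) : ∀ l : List ℕ, ∀ E, (buildDT S l E).depth S ≤ l.length
  | [], _ => le_refl 0
  | a :: l, E => by
      show 1 + (EVS S a).sup (fun v => (buildDT S l (insert (a, v) E)).depth S) ≤ l.length + 1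
      rw [add_comm]
      exact Nat.add_le_add_right (Finset.sup_le fun v _ => buildDT_depth S l _) 1

lemma hEAR_spec (S : Finset Rule) :
    ∃ Γ : DT, DT.SolvesEAR S Γ ∧ Γ.depth S = hEAR S := by
  have hne : {n | ∃ Γ : DT, DT.SolvesEAR S Γ ∧ DT.depth S Γ = n}.Nonempty := by
    refine ⟨_, buildDT S (attrsS S).toList ∅, ⟨?_, ?_⟩, rfl⟩
    · exact buildDT_over S _ _ (fun a ha => Finset.mem_toList.mp ha)
    · exact buildDT_solves S _ _ (fun a ha => Or.inl (Finset.mem_toList.mpr ha))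
  obtain ⟨Γ, h1, h2⟩ := Nat.sInf_mem hne
  exact ⟨Γ, h1, h2⟩

lemma cover_rec {S : Finset Rule} {α : Finset (ℕ × Val)}
    (hα : ∀ p ∈ α, p.2 ∈ EVS S p.1) :
    ∀ Γ : DT, ∀ E : Finset (ℕ × Val), Γ.Over S → Γ.SolvesFrom S E →
    (∀ p ∈ E, p.2 = valAt α p.1) →
    ∃ B : Finset ℕ, ∃ E' : Finset (ℕ × Val),
      B.card ≤ Γ.depth S ∧ (∀ p ∈ E', p.2 = valAt α p.1) ∧
      (∀ p ∈ E', p.1 ∈ B ∨ p ∈ E) ∧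
      ∀ r ∈ S, r.K ⊆ E' ∨ ¬ Consistent (r.K ∪ E') := by
  intro Γ
  induction Γ with
  | leaf τ =>
      intro E _ hsol hinv
      refine ⟨∅, E, le_refl 0, hinv, fun p hp => Or.inr hp, ?_⟩
      obtain ⟨h1, h2⟩ := hsol (consistent_of_fun hinv)
      intro r hr
      by_cases hrτ : r ∈ τ
      · exact Or.inl (h1 r hrτ)
      · exact Or.inr (h2 r hr hrτ)
  | node a c ih =>
      intro E hov hsol hinv
      have hv : valAt α a ∈ EVS S a := by
        by_cases h0 : valAt α a = none
        · rw [h0]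
          exact Finset.mem_insert_self _ _
        · obtain ⟨δ, hval⟩ := Option.ne_none_iff_exists'.mp h0
          have h1 : ((a, some δ) : ℕ × Val).2 ∈ EVS S ((a, some δ) : ℕ × Val).1 :=
            hα _ (valAt_mem hval)
          simp only at h1
          rw [hval]
          exact h1
      obtain ⟨B, E', hB, h2, h3, h4⟩ := ih (valAt α a)
        (insert (a, valAt α a) E) (hov.2 _ hv) (hsol _ hv)
        (by
          intro p hp
          rcases Finset.mem_insert.mp hp with rfl | hp
          · rfl
          · exact hinv p hp)
      refine ⟨insert a B, E', ?_, h2, ?_, h4⟩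
      · calc (insert a B).card ≤ B.card + 1 := Finset.card_insert_le _ _
          _ ≤ (c (valAt α a)).depth S + 1 := by omega
          _ ≤ 1 + (EVS S a).sup (fun v => (c v).depth S) := by
              rw [add_comm]
              exact Nat.add_le_add_left (Finset.le_sup (f := fun v => (c v).depth S) hv) 1
      · intro p hp
        rcases h3 p hp with h | h
        · exact Or.inl (Finset.mem_insert_of_mem h)
        · rcases Finset.mem_insert.mp h with rfl | h
          · exact Or.inl (Finset.mem_insert_self _ _)
          · exact Or.inr h

open Classical in
lemma leaves_rec {S M : Finset Rule} {α : Finset (ℕ × Val)} {ρ : Rule → Rule}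
    (hSwf : ∀ r ∈ S, r.WF)
    (hα : ∀ p ∈ α, p.2 ∈ EVS S p.1)
    (hρ : ∀ r' ∈ M, ρ r' ∈ S ∧ Consistent ((ρ r').K ∪ α) ∧ (ρ r').restrict α = r')
    (hMinj : ∀ r₁ ∈ M, ∀ r₂ ∈ M, r₁.K = r₂.K → r₁ = r₂) :
    ∀ Γ : DT, ∀ E : Finset (ℕ × Val), Γ.Over S → Γ.SolvesFrom S E →
    (M.filter (fun r' => ∀ p ∈ E, p.2 = valAt (α ∪ (ρ r').K) p.1)).card ≤ Γ.numLeaves S := by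
  intro Γ
  induction Γ with
  | leaf τ =>
      intro E _ hsol
      apply Finset.card_le_one.mpr
      intro r₁' h1 r₂' h2
      rw [Finset.mem_filter] at h1 h2
      obtain ⟨h1M, h1E⟩ := h1
      obtain ⟨h2M, h2E⟩ := h2
      have hE : Consistent E := consistent_of_fun h1E
      obtain ⟨hτ1, hτ2⟩ := hsol hE
      have key : ∀ r' ∈ M, (∀ p ∈ E, p.2 = valAt (α ∪ (ρ r').K) p.1) → (ρ r').K ⊆ E := by
        intro r' hM' hE'
        have hcons' : Consistent (α ∪ (ρ r').K) := by
          rw [Finset.union_comm]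
          exact (hρ _ hM').2.1
        have hc : Consistent ((ρ r').K ∪ E) := by
          intro p hp q hq hpq
          rcases Finset.mem_union.mp hp with hp' | hp' <;>
            rcases Finset.mem_union.mp hq with hq' | hq'
          · exact K_consistent (hSwf _ (hρ _ hM').1) p hp' q hq' hpq
          · rw [hE' q hq', ← hpq, valAt_eq hcons' (Finset.mem_union_right _ hp')]
          · rw [hE' p hp', hpq, valAt_eq hcons' (Finset.mem_union_right _ hq')]
          · exact hE p hp' q hq' hpq
        by_cases ht : ρ r' ∈ τ
        · exact hτ1 _ ht
        · exact absurd hc (hτ2 _ (hρ _ hM').1 ht)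
      have k1 := key _ h1M h1E
      have k2 := key _ h2M h2E
      have sub : ∀ r₁ ∈ M, ∀ r₂ ∈ M, (ρ r₁).K ⊆ E →
          (∀ p ∈ E, p.2 = valAt (α ∪ (ρ r₂).K) p.1) → (ρ r₁).K ⊆ α ∪ (ρ r₂).K := by
        intro r₁ _ r₂ _ hk hE2 p hp
        have hval := hE2 p (hk hp)
        simp only [Rule.K, Finset.mem_image] at hp
        obtain ⟨q, _, rfl⟩ := hp
        exact valAt_mem hval.symm
      have sub12 := sub _ h1M _ h2M k1 h2E
      have sub21 := sub _ h2M _ h1M k2 h1E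
      apply hMinj _ h1M _ h2M
      rw [← (hρ _ h1M).2.2, ← (hρ _ h2M).2.2, K_restrict, K_restrict]
      ext p
      simp only [Finset.mem_filter]
      constructor
      · rintro ⟨hp, hpα⟩
        exact ⟨(Finset.mem_union.mp (sub12 hp)).resolve_left hpα, hpα⟩
      · rintro ⟨hp, hpα⟩
        exact ⟨(Finset.mem_union.mp (sub21 hp)).resolve_left hpα, hpα⟩
  | node a c ih =>
      intro E hov hsol
      have hsub : (M.filter fun r' => ∀ p ∈ E, p.2 = valAt (α ∪ (ρ r').K) p.1) ⊆
          (EVS S a).biUnion (fun v => M.filter fun r' =>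
            ∀ p ∈ insert (a, v) E, p.2 = valAt (α ∪ (ρ r').K) p.1) := by
        intro r' hr'
        rw [Finset.mem_filter] at hr'
        obtain ⟨hrM, hrE⟩ := hr'
        have hvEV : valAt (α ∪ (ρ r').K) a ∈ EVS S a := by
          by_cases h0 : valAt (α ∪ (ρ r').K) a = none
          · rw [h0]
            exact Finset.mem_insert_self _ _
          · obtain ⟨δ, hval⟩ := Option.ne_none_iff_exists'.mp h0
            rw [hval]
            rcases Finset.mem_union.mp (valAt_mem hval) with h | h
            · have h1 : ((a, some δ) : ℕ × Val).2 ∈ EVS S ((a, some δ) : ℕ × Val).1 := hα _ h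
              simpa using h1
            · simp only [Rule.K, Finset.mem_image] at h
              obtain ⟨q, hq, hqe⟩ := h
              rw [Prod.mk.injEq, Option.some.injEq] at hqe
              have hδ : δ ∈ VS S a := Finset.mem_biUnion.mpr
                ⟨ρ r', (hρ _ hrM).1, Finset.mem_image.mpr
                  ⟨q, Finset.mem_filter.mpr ⟨hq, hqe.1⟩, hqe.2⟩⟩
              exact Finset.mem_insert_of_mem (Finset.mem_image_of_mem _ hδ)
        refine Finset.mem_biUnion.mpr ⟨_, hvEV, Finset.mem_filter.mpr ⟨hrM, ?_⟩⟩
        intro p hp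
        rcases Finset.mem_insert.mp hp with rfl | hp
        · rfl
        · exact hrE p hp
      calc (M.filter fun r' => ∀ p ∈ E, p.2 = valAt (α ∪ (ρ r').K) p.1).card
          ≤ ((EVS S a).biUnion (fun v => M.filter fun r' =>
              ∀ p ∈ insert (a, v) E, p.2 = valAt (α ∪ (ρ r').K) p.1)).card :=
            Finset.card_le_card hsub
        _ ≤ ∑ v ∈ EVS S a, (M.filter fun r' =>
              ∀ p ∈ insert (a, v) E, p.2 = valAt (α ∪ (ρ r').K) p.1).card :=
            Finset.card_biUnion_le
        _ ≤ ∑ v ∈ EVS S a, (c v).numLeaves S :=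
            Finset.sum_le_sum (fun v hv =>
              ih v (insert (a, v) E) (hov.2 v hv) (hsol v hv))
        _ = (DT.node a c).numLeaves S := rfl

lemma numLeaves_le (S : Finset Rule) : ∀ Γ : DT, Γ.Over S →
    Γ.numLeaves S ≤ (kS S + 1) ^ Γ.depth S := by
  intro Γ
  induction Γ with
  | leaf τ => exact fun _ => le_refl 1
  | node a c ih =>
      intro hov
      have hcard : (EVS S a).card ≤ kS S + 1 := by
        rw [EVS, Finset.card_insert_of_notMem (by simp),
          Finset.card_image_of_injective _ (Option.some_injective ℕ)]
        exact Nat.add_le_add_right (Finset.le_sup (f := fun a => (VS S a).card) hov.1) 1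
      calc (DT.node a c).numLeaves S = ∑ v ∈ EVS S a, (c v).numLeaves S := rfl
        _ ≤ ∑ _v ∈ EVS S a, (kS S + 1) ^ ((EVS S a).sup fun w => (c w).depth S) := by
            apply Finset.sum_le_sum
            intro v hv
            calc (c v).numLeaves S ≤ (kS S + 1) ^ (c v).depth S := ih v (hov.2 v hv)
              _ ≤ _ := Nat.pow_le_pow_right (Nat.succ_le_succ (Nat.zero_le _))
                  (Finset.le_sup (f := fun w => (c w).depth S) hv)
        _ = (EVS S a).card * (kS S + 1) ^ ((EVS S a).sup fun w => (c w).depth S) := by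
            rw [Finset.sum_const, smul_eq_mul]
        _ ≤ (kS S + 1) * (kS S + 1) ^ ((EVS S a).sup fun w => (c w).depth S) :=
            Nat.mul_le_mul_right _ hcard
        _ = (kS S + 1) ^ (DT.node a c).depth S := by
            show _ = (kS S + 1) ^ (1 + (EVS S a).sup fun w => (c w).depth S)
            rw [pow_add, pow_one]

end Aux

/-- Let `S` be a decision rule system with `n(S) > 0` and `α` be a consistent
equation system whose attributes belong to `A(S)` and whose values satisfy
`δ ∈ EV_S(a)`. If `S_α` is nonempty and `n(S_α) > 0`, then
`β((S_α)^max) ≤ h_EAR(S)` and `ln |(S_α)^max| ≤ h_EAR(S) · ln (k(S) + 1)`;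
consequently
`β((S_α)^max) · ln |(S_α)^max| + 1 ≤ h_EAR(S)² · ln (k(S) + 1) + 1`. -/
theorem round_bounds (S : Finset Rule) (hS : SysWF S) (hn : 0 < nS S)
    (α : Finset (ℕ × Val)) (hcons : Consistent α)
    (hα : ∀ p ∈ α, p.1 ∈ attrsS S ∧ p.2 ∈ EVS S p.1)
    (hne : (sysRestrict S α).Nonempty) (hnα : 0 < nS (sysRestrict S α))
    (M : Finset Rule) (hM : IsMaxSet (sysRestrict S α) M) :
    (betaS M : ℝ) ≤ (hEAR S : ℝ) ∧
    Real.log M.card ≤ (hEAR S : ℝ) * Real.log (kS S + 1) ∧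
    (betaS M : ℝ) * Real.log M.card + 1 ≤
      (hEAR S : ℝ) ^ 2 * Real.log (kS S + 1) + 1 := by
  classical
  obtain ⟨Γ, ⟨hΓov, hΓsol⟩, hΓd⟩ := hEAR_spec S
  have hα' : ∀ p ∈ α, p.2 ∈ EVS S p.1 := fun p hp => (hα p hp).2
  have hMmem : ∀ r' ∈ M, ∃ r, (r ∈ S ∧ Consistent (r.K ∪ α)) ∧ r.restrict α = r' := by
    intro r' hr'
    have h := (hM.1 r' hr').1
    rw [sysRestrict, Finset.mem_image] at h
    obtain ⟨r, hr, hre⟩ := h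
    rw [Finset.mem_filter] at hr
    exact ⟨r, hr, hre⟩
  choose! ρ h1ρ h2ρ using hMmem
  have hρ : ∀ r' ∈ M, ρ r' ∈ S ∧ Consistent ((ρ r').K ∪ α) ∧ (ρ r').restrict α = r' :=
    fun r' h => ⟨(h1ρ r' h).1, (h1ρ r' h).2, h2ρ r' h⟩
  have hMne : M.Nonempty := by
    obtain ⟨r, hrS, hrlen⟩ := Finset.exists_mem_eq_sup (sysRestrict S α) hne Rule.len
    obtain ⟨r', hr', _⟩ := hM.2.1 r hrS hrlen.symm
    exact ⟨r', hr'⟩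
  have hd1 : 1 ≤ dS (sysRestrict S α) := by
    rw [nS] at hnα
    obtain ⟨a, ha⟩ := Finset.card_pos.mp hnα
    obtain ⟨r, hr, har⟩ := Finset.mem_biUnion.mp ha
    have h1 : 1 ≤ r.len := by
      rw [Rule.len]
      apply Finset.card_pos.mpr
      obtain ⟨q, hq, _⟩ := Finset.mem_image.mp har
      exact ⟨q, hq⟩
    exact le_trans h1 (Finset.le_sup hr)
  obtain ⟨B, E', hBcard, hE'val, hE'B, hE'rules⟩ :=
    cover_rec hα' Γ ∅ hΓov hΓsol (by intro p hp; exact absurd hp (Finset.notMem_empty p))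
  have hcover : IsNodeCover M (B ∩ attrsS M) := by
    constructor
    · exact Finset.inter_subset_right
    · intro r' hr' _
      obtain ⟨hρS, hρc, hρr⟩ := hρ r' hr'
      have hlhs : r'.lhs.Nonempty := by
        apply Finset.card_pos.mp
        have hlen : r'.len = dS (sysRestrict S α) := (hM.1 r' hr').2
        rw [Rule.len] at hlen
        omega
      rcases hE'rules (ρ r') hρS with hsub | hinc
      · exfalso
        obtain ⟨p, hp⟩ := hlhs
        rw [← hρr, Rule.restrict] at hp
        obtain ⟨hpl, hpα⟩ := Finset.mem_filter.mp hp
        have hpK : (p.1, (some p.2 : Val)) ∈ (ρ r').K :=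
          Finset.mem_image_of_mem _ hpl
        have hvv := hE'val _ (hsub hpK)
        exact hpα (valAt_mem hvv.symm)
      · rw [Consistent] at hinc
        push_neg at hinc
        obtain ⟨p, hp, q, hq, heq, hne2⟩ := hinc
        have hKc : Consistent (ρ r').K := K_consistent (hS.2 _ hρS)
        have hE'c : Consistent E' := consistent_of_fun hE'val
        have main : ∀ p1, p1 ∈ (ρ r').K → ∀ q1, q1 ∈ E' → p1.1 = q1.1 → p1.2 ≠ q1.2 →
            (r'.attrs ∩ (B ∩ attrsS M)).Nonempty := by
          intro p1 hp1 q1 hq1 heq1 hne1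
          have hqv := hE'val q1 hq1
          simp only [Rule.K, Finset.mem_image] at hp1
          obtain ⟨p0, hp0, rfl⟩ := hp1
          simp only at heq1 hne1
          by_cases hcase : ∃ w, (p0.1, w) ∈ α
          · obtain ⟨w, hw⟩ := hcase
            exfalso
            apply hne1
            have h3 : (some p0.2 : Val) = w :=
              hρc _ (Finset.mem_union_left _ (Finset.mem_image_of_mem _ hp0)) _
                (Finset.mem_union_right _ hw) rfl
            rw [hqv, ← heq1, valAt_eq hcons hw, ← h3]
          · have hpα2 : ((p0.1, some p0.2) : ℕ × Val) ∉ α := fun h => hcase ⟨_, h⟩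
            have hpl' : p0 ∈ r'.lhs := by
              rw [← hρr, Rule.restrict]
              exact Finset.mem_filter.mpr ⟨hp0, hpα2⟩
            have ha1 : p0.1 ∈ r'.attrs := Finset.mem_image_of_mem _ hpl'
            have ha2 : p0.1 ∈ B := by
              rcases hE'B q1 hq1 with h | h
              · rw [heq1]; exact h
              · exact absurd h (Finset.notMem_empty q1)
            exact ⟨p0.1, Finset.mem_inter.mpr
              ⟨ha1, Finset.mem_inter.mpr ⟨ha2, attr_mem_attrsS hr' ha1⟩⟩⟩
        rcases Finset.mem_union.mp hp with hp1 | hp1 <;>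
          rcases Finset.mem_union.mp hq with hq1 | hq1
        · exact absurd (hKc _ hp1 _ hq1 heq) hne2
        · exact main p hp1 q hq1 heq hne2
        · exact main q hq1 p hp1 heq.symm (Ne.symm hne2)
        · exact absurd (hE'c _ hp1 _ hq1 heq) hne2
  have hbeta : betaS M ≤ hEAR S := by
    have h1 : betaS M ≤ (B ∩ attrsS M).card := Nat.sInf_le ⟨B ∩ attrsS M, hcover, rfl⟩
    have h2 : (B ∩ attrsS M).card ≤ B.card := Finset.card_le_card Finset.inter_subset_left
    rw [← hΓd]
    omega
  have hcard : M.card ≤ (kS S + 1) ^ hEAR S := by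
    have h1 := leaves_rec hS.2 hα' hρ hM.2.2 Γ ∅ hΓov hΓsol
    rw [Finset.filter_true_of_mem
      (fun r' _ => fun p hp => absurd hp (Finset.notMem_empty p))] at h1
    calc M.card ≤ Γ.numLeaves S := h1
      _ ≤ (kS S + 1) ^ Γ.depth S := numLeaves_le S Γ hΓov
      _ = (kS S + 1) ^ hEAR S := by rw [hΓd]
  have hMpos : 1 ≤ M.card := Finset.card_pos.mpr hMne
  have hA : (betaS M : ℝ) ≤ (hEAR S : ℝ) := by exact_mod_cast hbeta
  have hB : Real.log M.card ≤ (hEAR S : ℝ) * Real.log (kS S + 1) := by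
    have hle : (M.card : ℝ) ≤ ((kS S : ℝ) + 1) ^ hEAR S := by exact_mod_cast hcard
    have hll := Real.log_le_log (by exact_mod_cast hMpos) hle
    rwa [Real.log_pow] at hll
  refine ⟨hA, hB, ?_⟩
  have hlognn : 0 ≤ Real.log M.card := Real.log_nonneg (by exact_mod_cast hMpos)
  have hmul := mul_le_mul hA hB hlognn (Nat.cast_nonneg _)
  have hring : (hEAR S : ℝ) * ((hEAR S : ℝ) * Real.log (kS S + 1)) =
      (hEAR S : ℝ) ^ 2 * Real.log (kS S + 1) := by ring
  linarith
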